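/- The function T(z) = 2(1 - e^{√5 z}) / ((3-√5)e^{√5 z} - 3 - √5) satisfies T'(z) = 1 + 3T(z) + T(z)² with T(0)=0, and its Taylor coefficients T_m = m!·[z^m]T(z) are given by T_m = √5 · Σ_{k≥1} ((7-3√5)/2)^k · (√5·k)^m for m ≥ 1. -/

import Mathlib

open Real Filter Set

noncomputable def sr5 : ℝ := Real.sqrt 5
noncomputable def qq : ℝ := (7 - 3 * sr5) / 2
noncomputable def TT : ℝ → ℝ := fun z =>
  2 * (1 - Real.exp (sr5 * z)) / ((3 - sr5) * Real.exp (sr5 * z) - 3 - sr5)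
noncomputable def GG : ℕ → ℝ → ℝ := fun m z =>
  ∑' k : ℕ, qq ^ (k + 1) * (sr5 * ((k : ℝ) + 1)) ^ m * Real.exp (sr5 * ((k : ℝ) + 1) * z)

lemma hs2 : sr5 ^ 2 = 5 := Real.sq_sqrt (by norm_num)
lemma hs_lb : (2.234 : ℝ) < sr5 := by
  rw [sr5, show (2.234:ℝ) = Real.sqrt (2.234^2) by rw [Real.sqrt_sq]; norm_num]
  exact Real.sqrt_lt_sqrt (by norm_num) (by norm_num)
lemma hs_ub : sr5 < 9/4 := by
  nlinarith [hs2, Real.sqrt_nonneg 5, sr5]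
lemma hs_pos : 0 < sr5 := by nlinarith [hs_lb]
lemma hq_pos : 0 < qq := by rw [qq]; nlinarith [hs_ub]
lemma hq_lt : qq < 0.1491 := by rw [qq]; nlinarith [hs_lb]

lemma hrho : qq * Real.exp (sr5 * (1/4)) < 1 := by
  have h1 : Real.exp (sr5 * (1/4)) < Real.exp 1 := by
    apply Real.exp_lt_exp.2; nlinarith [hs_ub]
  have h2 : Real.exp 1 < 2.7182818286 := Real.exp_one_lt_d9
  nlinarith [hq_pos, hq_lt, Real.exp_pos (sr5 * (1/4))]

-- summability of terms
lemma summable_terms (m : ℕ) (r : ℝ) (hr0 : 0 ≤ r) (hr1 : r < 1) :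
    Summable fun k : ℕ => (sr5 * ((k:ℝ)+1)) ^ m * r ^ (k+1) := by
  have h : Summable fun n : ℕ => ((n:ℝ)) ^ m * r ^ n :=
    summable_pow_mul_geometric_of_norm_lt_one m (by rwa [Real.norm_eq_abs, abs_of_nonneg hr0])
  have h2 : Summable fun k : ℕ => (((k:ℝ)+1)) ^ m * r ^ (k+1) := by
    have := (summable_nat_add_iff 1).2 h
    simpa [Nat.cast_add] using this
  have := h2.mul_left (sr5 ^ m)
  apply this.congr
  intro k; rw [mul_pow]; ring

noncomputable def SS : Set ℝ := Set.Ioo (-(1/4) : ℝ) (1/4)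

lemma term_hasDeriv (m k : ℕ) (z : ℝ) :
    HasDerivAt (fun z => qq ^ (k + 1) * (sr5 * ((k : ℝ) + 1)) ^ m * Real.exp (sr5 * ((k : ℝ) + 1) * z))
      (qq ^ (k + 1) * (sr5 * ((k : ℝ) + 1)) ^ (m+1) * Real.exp (sr5 * ((k : ℝ) + 1) * z)) z := by
  set a := sr5 * ((k : ℝ) + 1)
  have h : HasDerivAt (fun z : ℝ => Real.exp (a * z)) (a * Real.exp (a * z)) z := by
    have := ((hasDerivAt_id z).const_mul a).exp
    simpa [mul_comm] using this
  have := h.const_mul (qq ^ (k + 1) * a ^ m)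
  convert this using 1
  · rfl
  · rfl
  ring

lemma exp_term_bound (m k : ℕ) {z : ℝ} (hz : z ∈ SS) :
    ‖qq ^ (k + 1) * (sr5 * ((k : ℝ) + 1)) ^ m * Real.exp (sr5 * ((k : ℝ) + 1) * z)‖
      ≤ (sr5 * ((k:ℝ)+1)) ^ m * (qq * Real.exp (sr5 * (1/4))) ^ (k+1) := by
  have hk : (0:ℝ) ≤ (k:ℝ) + 1 := by positivity
  have ha : (0:ℝ) ≤ sr5 * ((k:ℝ)+1) := mul_nonneg hs_pos.le hk
  have hqnn : (0:ℝ) ≤ qq := hq_pos.le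
  have hexp : Real.exp (sr5 * ((k : ℝ) + 1) * z) ≤ Real.exp (sr5 * (1/4)) ^ (k+1) := by
    rw [← Real.exp_nat_mul]
    apply Real.exp_le_exp.2
    have hz2 := hz.2
    have : sr5 * ((k:ℝ)+1) * z ≤ sr5 * ((k:ℝ)+1) * (1/4) := by
      rcases le_or_gt z (1/4) with h | h
      · apply mul_le_mul_of_nonneg_left h ha
      · linarith [hz.2]
    calc sr5 * ((k:ℝ)+1) * z ≤ sr5 * ((k:ℝ)+1) * (1/4) := this
      _ = (k+1 : ℕ) * (sr5 * (1/4)) := by push_cast; ring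
  have hterm : (0:ℝ) ≤ qq ^ (k + 1) * (sr5 * ((k : ℝ) + 1)) ^ m :=
    mul_nonneg (pow_nonneg hqnn _) (pow_nonneg ha _)
  rw [Real.norm_eq_abs, abs_of_nonneg (mul_nonneg hterm (Real.exp_pos _).le)]
  calc qq ^ (k + 1) * (sr5 * ((k : ℝ) + 1)) ^ m * Real.exp (sr5 * ((k : ℝ) + 1) * z)
      ≤ qq ^ (k + 1) * (sr5 * ((k : ℝ) + 1)) ^ m * Real.exp (sr5 * (1/4)) ^ (k+1) :=
        mul_le_mul_of_nonneg_left hexp hterm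
    _ = (sr5 * ((k:ℝ)+1)) ^ m * (qq * Real.exp (sr5 * (1/4))) ^ (k+1) := by
        rw [mul_pow]; ring

lemma GG_hasDeriv (m : ℕ) {z : ℝ} (hz : z ∈ SS) :
    HasDerivAt (GG m) (GG (m+1) z) z := by
  have hrho0 : 0 ≤ qq * Real.exp (sr5 * (1/4)) := mul_nonneg hq_pos.le (Real.exp_pos _).le
  apply hasDerivAt_tsum_of_isPreconnected
    (summable_terms (m+1) _ hrho0 hrho) isOpen_Ioo (isPreconnected_Ioo)
    (fun k y _ => term_hasDeriv m k y) (fun k y hy => exp_term_bound (m+1) k hy)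
    (show (0:ℝ) ∈ SS by constructor <;> norm_num)
  · apply Summable.of_norm
    apply (summable_terms m _ hrho0 hrho).of_nonneg_of_le (fun k => norm_nonneg _)
    intro k
    exact exp_term_bound m k (show (0:ℝ) ∈ SS by constructor <;> norm_num)
  · exact hz

lemma w_lt_one {z : ℝ} (hz : z ∈ SS) : qq * Real.exp (sr5 * z) < 1 := by
  have h1 : Real.exp (sr5 * z) ≤ Real.exp (sr5 * (1/4)) := by
    apply Real.exp_le_exp.2
    exact mul_le_mul_of_nonneg_left hz.2.le hs_pos.le
  calc qq * Real.exp (sr5 * z) ≤ qq * Real.exp (sr5 * (1/4)) :=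
        mul_le_mul_of_nonneg_left h1 hq_pos.le
    _ < 1 := hrho

lemma GG0_eq {z : ℝ} (hz : z ∈ SS) :
    GG 0 z = qq * Real.exp (sr5 * z) * (1 - qq * Real.exp (sr5 * z))⁻¹ := by
  set w := qq * Real.exp (sr5 * z) with hw
  have hw0 : 0 ≤ w := mul_nonneg hq_pos.le (Real.exp_pos _).le
  have hw1 : w < 1 := w_lt_one hz
  have h1 : GG 0 z = ∑' k : ℕ, w * w ^ k := by
    apply tsum_congr; intro k
    rw [pow_zero, mul_one, show sr5 * ((k:ℝ)+1) * z = ((k+1 : ℕ) : ℝ) * (sr5 * z) by push_cast; ring,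
      Real.exp_nat_mul, ← mul_pow, hw]
    ring
  rw [h1, tsum_mul_left, tsum_geometric_of_lt_one hw0 hw1]

lemma denom_factor (u : ℝ) : (3 - sr5) * u - 3 - sr5 = (3 + sr5) * (qq * u - 1) := by
  rw [qq]; linear_combination (3 * u / 2) * hs2

lemma TT_eq_F {z : ℝ} (hz : z ∈ SS) : TT z = (sr5 - 3)/2 + sr5 * GG 0 z := by
  rw [GG0_eq hz, TT]
  set u := Real.exp (sr5 * z) with hu
  have hw1 : qq * u < 1 := w_lt_one hz
  have h1 : (1 : ℝ) - qq * u ≠ 0 := by linarith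
  have h2 : (3 - sr5) * u - 3 - sr5 ≠ 0 := by
    rw [denom_factor]
    apply mul_ne_zero (by nlinarith [hs_pos]) (by linarith)
  rw [denom_factor] at h2 ⊢
  have h3 : u * qq - 1 ≠ 0 := by intro h; apply h2; rw [mul_comm qq, h, mul_zero]
  have h4 : 1 - u * qq ≠ 0 := by rwa [mul_comm u]
  have h5 : (3:ℝ) + sr5 ≠ 0 := by linarith [hs_pos]
  field_simp
  rw [qq]
  linear_combination ((1 : ℝ) - 9*u + 77/4*u^2 - 3*u^2*sr5 - 9/4*u^2*sr5^2) * hs2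

lemma SS_open : IsOpen SS := isOpen_Ioo
lemma zero_mem_SS : (0:ℝ) ∈ SS := by constructor <;> norm_num

lemma iter_eq : ∀ m, 1 ≤ m → ∀ z ∈ SS, iteratedDeriv m TT z = sr5 * GG m z := by
  intro m hm
  induction m, hm using Nat.le_induction with
  | base =>
    intro z hz
    rw [iteratedDeriv_one]
    have hEq : TT =ᶠ[nhds z] fun w => (sr5 - 3)/2 + sr5 * GG 0 w :=
      Filter.eventuallyEq_of_mem (SS_open.mem_nhds hz) (fun w hw => TT_eq_F hw)
    rw [hEq.deriv_eq]
    have : HasDerivAt (fun w => (sr5 - 3)/2 + sr5 * GG 0 w) (sr5 * GG 1 z) z :=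
      (((GG_hasDeriv 0 hz)).const_mul sr5).const_add _
    exact this.deriv
  | succ m hm ih =>
    intro z hz
    rw [iteratedDeriv_succ]
    have hEq : iteratedDeriv m TT =ᶠ[nhds z] fun w => sr5 * GG m w :=
      Filter.eventuallyEq_of_mem (SS_open.mem_nhds hz) (fun w hw => ih w hw)
    rw [hEq.deriv_eq]
    exact (((GG_hasDeriv m hz)).const_mul sr5).deriv

lemma part3 (m : ℕ) (hm : 1 ≤ m) :
    iteratedDeriv m TT 0
      = sr5 * ∑' k : ℕ, qq ^ (k + 1) * (sr5 * ((k:ℝ) + 1)) ^ m := by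
  rw [iter_eq m hm 0 zero_mem_SS, GG]
  congr 1
  apply tsum_congr; intro k
  rw [mul_zero, Real.exp_zero, mul_one]

-- ODE part
lemma part2 (z : ℝ) (hD : (3 - sr5) * Real.exp (sr5 * z) - 3 - sr5 ≠ 0) :
    deriv TT z = 1 + 3 * TT z + TT z ^ 2 := by
  set u := Real.exp (sr5 * z) with hu
  have hN : HasDerivAt (fun z : ℝ => 2 * (1 - Real.exp (sr5 * z))) (-(2 * sr5) * u) z := by
    have h : HasDerivAt (fun z : ℝ => Real.exp (sr5 * z)) (sr5 * u) z := by
      have := ((hasDerivAt_id z).const_mul sr5).exp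
      simpa [mul_comm, hu] using this
    have := ((h.const_mul (-1:ℝ)).const_add (1:ℝ)).const_mul (2:ℝ)
    convert this using 1
    · rfl
    · rfl
    · funext w; ring
    · ring
  have hDd : HasDerivAt (fun z : ℝ => (3 - sr5) * Real.exp (sr5 * z) - 3 - sr5)
      ((3 - sr5) * (sr5 * u)) z := by
    have h : HasDerivAt (fun z : ℝ => Real.exp (sr5 * z)) (sr5 * u) z := by
      have := ((hasDerivAt_id z).const_mul sr5).exp
      simpa [mul_comm, hu] using this
    have := ((h.const_mul ((3:ℝ) - sr5)).sub_const 3).sub_const sr5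
    convert this using 1
  have hT : HasDerivAt TT
      ((-(2 * sr5) * u * ((3 - sr5) * u - 3 - sr5) -
        2 * (1 - u) * ((3 - sr5) * (sr5 * u))) / ((3 - sr5) * u - 3 - sr5) ^ 2) z := by
    exact hN.div hDd hD
  rw [hT.deriv, TT]
  rw [← hu]
  have hD' : u * (3 - sr5) - 3 - sr5 ≠ 0 := by rwa [mul_comm]
  field_simp
  linear_combination (-u^2 + 2*u - 1) * hs2



/-- The EGF of binary free multilabelled increasing trees,
`T(z) = 2(1 - e^{√5 z}) / ((3-√5)e^{√5 z} - 3 - √5)`, satisfies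
`T' = 1 + 3T + T²` with `T(0) = 0` (the ODE wherever the denominator is
nonzero), and its Taylor coefficients `T_m = m!·[z^m]T = (d/dz)^m T(0)` are
`T_m = √5 · ∑_{k≥1} ((7-3√5)/2)^k (√5 k)^m` for `m ≥ 1`. -/
theorem binary_free_multilabelled_egf :
    (fun z : ℝ =>
        2 * (1 - Real.exp (Real.sqrt 5 * z)) /
          ((3 - Real.sqrt 5) * Real.exp (Real.sqrt 5 * z) - 3 - Real.sqrt 5)) 0 = 0 ∧
    (∀ z : ℝ, (3 - Real.sqrt 5) * Real.exp (Real.sqrt 5 * z) - 3 - Real.sqrt 5 ≠ 0 →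
      deriv (fun z : ℝ =>
        2 * (1 - Real.exp (Real.sqrt 5 * z)) /
          ((3 - Real.sqrt 5) * Real.exp (Real.sqrt 5 * z) - 3 - Real.sqrt 5)) z
        = 1 + 3 * (2 * (1 - Real.exp (Real.sqrt 5 * z)) /
              ((3 - Real.sqrt 5) * Real.exp (Real.sqrt 5 * z) - 3 - Real.sqrt 5))
            + (2 * (1 - Real.exp (Real.sqrt 5 * z)) /
              ((3 - Real.sqrt 5) * Real.exp (Real.sqrt 5 * z) - 3 - Real.sqrt 5)) ^ 2) ∧
    ∀ m : ℕ, 1 ≤ m →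
      iteratedDeriv m (fun z : ℝ =>
        2 * (1 - Real.exp (Real.sqrt 5 * z)) /
          ((3 - Real.sqrt 5) * Real.exp (Real.sqrt 5 * z) - 3 - Real.sqrt 5)) 0
        = Real.sqrt 5 * ∑' k : ℕ,
            ((7 - 3 * Real.sqrt 5) / 2) ^ (k + 1) * (Real.sqrt 5 * (k + 1)) ^ m := by
  refine ⟨?_, ?_, ?_⟩
  · simp only [mul_zero, Real.exp_zero]
    have : (3 - Real.sqrt 5) * 1 - 3 - Real.sqrt 5 ≠ 0 := by
      have := hs_pos; rw [sr5] at this; nlinarith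
    field_simp
    simp
  · intro z hz
    exact part2 z hz
  · intro m hm
    exact part3 m hm
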